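/- Let ω = e^{2πi/3}. The nine vectors in ℂ³ obtained from (0, 1, 1) by applying all combinations of the cyclic shift (z₁,z₂,z₃) ↦ (z₃,z₁,z₂) and the phase map (z₁,z₂,z₃) ↦ (z₁, ω z₂, ω² z₃) define nine points of ℂP², any two distinct of which satisfy |⟨w, z⟩|²/(‖w‖²‖z‖²) = 1/4. -/

import Mathlib

/-- The orbit of the vector `(0,1,1)` under the Weyl–Heisenberg group:
`v j k` is obtained by applying the cyclic shift `j` times and the phase map
`(z₁,z₂,z₃) ↦ (z₁, ω z₂, ω² z₃)` `k` times. -/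
noncomputable def WHorbit (ω : ℂ) (j k : Fin 3) : Fin 3 → ℂ :=
  fun i => ω ^ ((k : ℕ) * (i : ℕ)) * (![0, 1, 1] : Fin 3 → ℂ) (i + j)

private lemma fin_aux (z : ℂ) (h : z * (starRingEnd ℂ) z = 1) :
    ‖z‖ = 1 ∨ ‖z‖ = -1 := by
  have h2 : Complex.normSq z = 1 := by
    have h1 : ((Complex.normSq z : ℝ) : ℂ) = 1 := by rw [← Complex.mul_conj, h]
    exact_mod_cast h1
  have h3 : ‖z‖ ^ 2 = 1 := by rw [Complex.sq_norm, h2]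
  exact Or.inl ((pow_eq_one_iff_of_nonneg (norm_nonneg z) two_ne_zero).mp h3)

set_option maxHeartbeats 1000000 in
theorem stmt_8 (ω : ℂ) (hω : ω = Complex.exp (2 * Real.pi * Complex.I / 3))
    (j k j' k' : Fin 3) (hne : (j, k) ≠ (j', k')) :
    ‖∑ i : Fin 3,
        (starRingEnd ℂ) (WHorbit ω j k i) * WHorbit ω j' k' i‖ ^ 2 /
      ((∑ i : Fin 3, ‖WHorbit ω j k i‖ ^ 2) *
        (∑ i : Fin 3, ‖WHorbit ω j' k' i‖ ^ 2)) = 1 / 4 := by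
  have hprim : IsPrimitiveRoot ω 3 := hω ▸ Complex.isPrimitiveRoot_exp 3 (by norm_num)
  have hω3 : ω ^ 3 = 1 := hprim.pow_eq_one
  have hne1 : ω ≠ 1 := hprim.ne_one (by norm_num)
  have hquad : ω ^ 2 + ω + 1 = 0 := by
    have h : (ω - 1) * (ω ^ 2 + ω + 1) = 0 := by linear_combination hω3
    rcases mul_eq_zero.mp h with h | h
    · exact absurd (sub_eq_zero.mp h) hne1
    · exact h
  have hconj : (starRingEnd ℂ) ω = ω ^ 2 := by
    have habs : ‖ω‖ = 1 := by rw [hω, Complex.norm_exp]; norm_num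
    have h1 : (starRingEnd ℂ) ω * ω = 1 := by
      rw [mul_comm, Complex.mul_conj]
      norm_cast
      rw [Complex.normSq_eq_norm_sq, habs]; norm_num
    calc (starRingEnd ℂ) ω = (starRingEnd ℂ) ω * (ω * ω ^ 2) := by
          rw [show ω * ω ^ 2 = ω ^ 3 by ring, hω3, mul_one]
      _ = ω ^ 2 := by rw [← mul_assoc, h1, one_mul]
  have habs : ‖ω‖ = 1 := by rw [hω, Complex.norm_exp]; norm_num
  fin_cases j <;> fin_cases k <;> fin_cases j' <;> fin_cases k' <;>
    first
    | exact absurd rfl hne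
    | (simp [WHorbit, Fin.sum_univ_three, map_mul, map_pow, hconj, habs, Fin.isValue]
       first
       | (norm_num; done)
       | (norm_num
          refine fin_aux _ ?_
          simp only [map_add, map_mul, map_pow, map_one, hconj]
          first
          | linear_combination (ω^28 - ω^27 + ω^25 - ω^24 + ω^23 - ω^21 + ω^20 + ω^13 -
              ω^12 + ω^10 - ω^9 + ω^7 - ω^6 + ω^4 - ω^3 + ω - 1) * hquad
          | linear_combination (ω^22 - ω^21 + ω^19 - ω^17 + ω^16 + ω^10 - ω^9 + ω^7 -
              ω^6 + ω^4 - ω^3 + ω - 1) * hquad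
          | linear_combination (ω^10 - ω^9 + ω^7 - ω^5 + ω^4) * hquad
          | linear_combination (ω^4 - ω^3 + ω^2) * hquad
          | linear_combination ω * hquad
          | linear_combination (ω^4 + ω - 1) * hquad
          | linear_combination (ω^10 - ω^9 + ω^8 + ω^4 - ω^3 + ω - 1) * hquad
          | linear_combination (ω^13 - ω^12 + ω^10 - ω^9 + ω^8 - ω^6 + ω^5) * hquad
          | linear_combination (ω^22 - ω^21 + ω^19 - ω^18 + ω^16 - ω^15 + ω^14 - ω^12 +
              ω^11 - ω^9 + ω^8) * hquad
          | linear_combination (ω^28 - ω^27 + ω^25 - ω^24 + ω^22 - ω^21 + ω^19 - ω^17 +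
              ω^16 - ω^14 + ω^13 - ω^11 + ω^10) * hquad))
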